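/- Let n ≥ 4 and let G be the simple graph on vertex set {0, 1, …, n−1} obtained from the complete graph K_n by deleting the two disjoint edges {0,1} and {2,3}. Then for each of the three matrices M ∈ { A(G), L(G), Q(G) } there exists γ ∈ ℂ with |γ| = 1 such that exp(i·(π/2)·M) · (e_0 − e_2) = γ · (e_1 − e_3). That is, removing a matching of size two from K_n yields pair state transfer relative to the adjacency, Laplacian, and signless Laplacian matrices between the same pair of states at time π/2. -/

import Mathlib

open Matrix

/-- The transition matrix `U_R(t) = exp(i·t·R)` of a real square matrix `R`,
as a complex matrix. -/
noncomputable def U {ι : Type*} [Fintype ι] [DecidableEq ι]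
    (R : Matrix ι ι ℝ) (t : ℝ) : Matrix ι ι ℂ :=
  NormedSpace.exp ((Complex.I * (t : ℂ)) • R.map (Complex.ofReal ·))

/-- The standard basis vector `e_v` as a complex vector. -/
def ket {ι : Type*} [DecidableEq ι] (v : ι) : ι → ℂ :=
  fun i => if i = v then 1 else 0

lemma mulVec_ket {ι : Type*} [Fintype ι] [DecidableEq ι] (M : Matrix ι ι ℂ) (a : ι) :
    M *ᵥ ket a = fun i => M i a := by
  funext i
  norm_num [ket, mulVec, dotProduct]

lemma mulVec_p {ι : Type*} [Fintype ι] [DecidableEq ι] (M : Matrix ι ι ℂ) (a0 a1 a2 a3 : ι)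
    (i : ι) : (M *ᵥ (ket a0 - ket a1 - ket a2 + ket a3)) i = M i a0 - M i a1 - M i a2 + M i a3 := by
  simp [Matrix.mulVec_add, Matrix.mulVec_sub, mulVec_ket]

lemma mulVec_q {ι : Type*} [Fintype ι] [DecidableEq ι] (M : Matrix ι ι ℂ) (a0 a1 a2 a3 : ι)
    (i : ι) : (M *ᵥ (ket a0 + ket a1 - ket a2 - ket a3)) i = M i a0 + M i a1 - M i a2 - M i a3 := by
  simp [Matrix.mulVec_add, Matrix.mulVec_sub, mulVec_ket]

lemma exp_mulVec_eigenvec {ι : Type*} [Fintype ι] [DecidableEq ι]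
    (M : Matrix ι ι ℂ) (x : ι → ℂ) (μ : ℂ) (h : M *ᵥ x = μ • x) :
    NormedSpace.exp M *ᵥ x = Complex.exp μ • x := by
  letI : SeminormedRing (Matrix ι ι ℂ) := Matrix.linftyOpSemiNormedRing
  letI : NormedRing (Matrix ι ι ℂ) := Matrix.linftyOpNormedRing
  letI : NormedAlgebra ℂ (Matrix ι ι ℂ) := Matrix.linftyOpNormedAlgebra
  have hpow : ∀ k : ℕ, (M ^ k) *ᵥ x = (μ ^ k) • x := by
    intro k
    induction k with
    | zero => simp
    | succ k ih =>
      rw [pow_succ, ← mulVec_mulVec, h, mulVec_smul, ih, smul_smul, pow_succ, mul_comm]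
  have hsum : Summable (fun k : ℕ => ((Nat.factorial k : ℂ))⁻¹ • M ^ k) :=
    NormedSpace.expSeries_summable' M
  let T : Matrix ι ι ℂ →ₗ[ℂ] (ι → ℂ) :=
    { toFun := fun N => N *ᵥ x
      map_add' := fun A B => Matrix.add_mulVec A B x
      map_smul' := fun c A => Matrix.smul_mulVec c A x }
  have hT : Continuous T := T.continuous_of_finiteDimensional
  let Tc : Matrix ι ι ℂ →L[ℂ] (ι → ℂ) := ⟨T, hT⟩
  have h2 : ∀ k : ℕ, (((Nat.factorial k : ℂ))⁻¹ • M ^ k) *ᵥ x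
      = (((Nat.factorial k : ℂ))⁻¹ * μ ^ k) • x := by
    intro k; rw [Matrix.smul_mulVec, hpow, smul_smul]
  have h4 : Summable fun k : ℕ => ((Nat.factorial k : ℂ))⁻¹ * μ ^ k :=
    (NormedSpace.expSeries_summable' (𝕂 := ℂ) (𝔸 := ℂ) μ).congr (fun k => smul_eq_mul _ _)
  have h1 : NormedSpace.exp M *ᵥ x = Tc (NormedSpace.exp M) := rfl
  rw [h1, NormedSpace.exp_eq_tsum ℂ]
  calc Tc (∑' k : ℕ, ((Nat.factorial k : ℂ))⁻¹ • M ^ k)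
      = ∑' k : ℕ, Tc (((Nat.factorial k : ℂ))⁻¹ • M ^ k) := Tc.map_tsum hsum
    _ = ∑' k : ℕ, (((Nat.factorial k : ℂ))⁻¹ * μ ^ k) • x := tsum_congr h2
    _ = (∑' k : ℕ, ((Nat.factorial k : ℂ))⁻¹ * μ ^ k) • x := Summable.tsum_smul_const h4 x
    _ = Complex.exp μ • x := by
        rw [Complex.exp_eq_exp_ℂ, NormedSpace.exp_eq_tsum ℂ]
        simp [smul_eq_mul]

lemma key {ι : Type*} [Fintype ι] [DecidableEq ι] (R : Matrix ι ι ℝ) (a0 a1 a2 a3 : ι)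
    (l1 l2 : ℝ)
    (h1 : (R.map (Complex.ofReal ·)) *ᵥ (ket a0 - ket a1 - ket a2 + ket a3)
        = ((l1 : ℂ)) • (ket a0 - ket a1 - ket a2 + ket a3))
    (h2 : (R.map (Complex.ofReal ·)) *ᵥ (ket a0 + ket a1 - ket a2 - ket a3)
        = ((l2 : ℂ)) • (ket a0 + ket a1 - ket a2 - ket a3))
    (hd : l1 = l2 + 2 ∨ l2 = l1 + 2) :
    ∃ γ : ℂ, ‖γ‖ = 1 ∧
      U R (Real.pi / 2) *ᵥ (ket a0 - ket a2) = γ • (ket a1 - ket a3) := by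
  set t : ℝ := Real.pi / 2 with ht
  set N : Matrix ι ι ℂ := (Complex.I * (t : ℂ)) • R.map (Complex.ofReal ·) with hN
  set p : ι → ℂ := ket a0 - ket a1 - ket a2 + ket a3 with hp
  set q : ι → ℂ := ket a0 + ket a1 - ket a2 - ket a3 with hq
  have hNp : N *ᵥ p = (Complex.I * (t : ℂ) * (l1 : ℂ)) • p := by
    rw [hN, Matrix.smul_mulVec, h1, smul_smul]
  have hNq : N *ᵥ q = (Complex.I * (t : ℂ) * (l2 : ℂ)) • q := by
    rw [hN, Matrix.smul_mulVec, h2, smul_smul]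
  have e1 := exp_mulVec_eigenvec N p _ hNp
  have e2 := exp_mulVec_eigenvec N q _ hNq
  set γ : ℂ := Complex.exp (Complex.I * (t : ℂ) * (l2 : ℂ)) with hγ
  have hpi : Complex.I * (t : ℂ) * 2 = (Real.pi : ℂ) * Complex.I := by
    rw [ht]; push_cast; ring
  have hneg : Complex.exp (Complex.I * (t : ℂ) * (l1 : ℂ)) = -γ := by
    rcases hd with hd | hd
    · have : Complex.I * (t : ℂ) * (l1 : ℂ)
          = Complex.I * (t : ℂ) * (l2 : ℂ) + (Real.pi : ℂ) * Complex.I := by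
        rw [hd, ← hpi]; push_cast; ring
      rw [this, Complex.exp_add, Complex.exp_pi_mul_I, hγ]; ring
    · have : Complex.I * (t : ℂ) * (l2 : ℂ)
          = Complex.I * (t : ℂ) * (l1 : ℂ) + (Real.pi : ℂ) * Complex.I := by
        rw [hd, ← hpi]; push_cast; ring
      rw [hγ, this, Complex.exp_add, Complex.exp_pi_mul_I]; ring
  refine ⟨γ, ?_, ?_⟩
  · have hre : (Complex.I * (t : ℂ) * (l2 : ℂ)).re = 0 := by simp
    rw [hγ, Complex.norm_exp, hre, Real.exp_zero]
  · have hv : (2 : ℂ) • (ket a0 - ket (ι := ι) a2) = p + q := by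
      rw [hp, hq]; module
    have hw : q - p = (2 : ℂ) • (ket a1 - ket (ι := ι) a3) := by
      rw [hp, hq]; module
    have hU : U R t = NormedSpace.exp N := rfl
    have h2v : U R t *ᵥ ((2 : ℂ) • (ket a0 - ket a2))
        = (2 : ℂ) • (γ • (ket a1 - ket a3)) := by
      rw [hv, hU, Matrix.mulVec_add, e1, e2, hneg, smul_comm (2 : ℂ) γ, ← hw]
      module
    rw [Matrix.mulVec_smul] at h2v
    exact smul_right_injective (ι → ℂ) (by norm_num : (2 : ℂ) ≠ 0) h2v

lemma master {ι : Type*} [Fintype ι] [DecidableEq ι]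
    (G : SimpleGraph ι) [DecidableRel G.Adj] (a0 a1 a2 a3 : ι)
    (hn : 4 ≤ Fintype.card ι)
    (d01 : a0 ≠ a1) (d02 : a0 ≠ a2) (d03 : a0 ≠ a3)
    (d12 : a1 ≠ a2) (d13 : a1 ≠ a3) (d23 : a2 ≠ a3)
    (hadj : ∀ u v : ι, G.Adj u v ↔ u ≠ v ∧ ¬(u = a0 ∧ v = a1) ∧ ¬(u = a1 ∧ v = a0)
        ∧ ¬(u = a2 ∧ v = a3) ∧ ¬(u = a3 ∧ v = a2)) :
    ∀ M ∈ ({G.adjMatrix ℝ, G.lapMatrix ℝ, G.degMatrix ℝ + G.adjMatrix ℝ} : Set (Matrix ι ι ℝ)),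
      ∃ γ : ℂ, ‖γ‖ = 1 ∧
        U M (Real.pi / 2) *ᵥ (ket a0 - ket a2) = γ • (ket a1 - ket a3) := by
  have d10 := d01.symm; have d20 := d02.symm; have d30 := d03.symm
  have d21 := d12.symm; have d31 := d13.symm; have d32 := d23.symm
  set c : ℝ := (Fintype.card ι : ℝ) with hc
  set Ac : Matrix ι ι ℂ := (G.adjMatrix ℝ).map (Complex.ofReal ·) with hAcdef
  set Dc : Matrix ι ι ℂ := (G.degMatrix ℝ).map (Complex.ofReal ·) with hDcdef
  set p : ι → ℂ := ket a0 - ket a1 - ket a2 + ket a3 with hpdef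
  set q : ι → ℂ := ket a0 + ket a1 - ket a2 - ket a3 with hqdef
  have hAc : ∀ i j, Ac i j = if G.Adj i j then 1 else 0 := by
    intro i j
    simp [hAcdef, Matrix.map_apply, SimpleGraph.adjMatrix_apply, apply_ite]
  have hDc : ∀ i j, Dc i j = if i = j then (G.degree i : ℂ) else 0 := by
    intro i j
    by_cases h : i = j
    · subst h; simp [hDcdef, Matrix.map_apply, SimpleGraph.degMatrix, Matrix.diagonal_apply_eq]
    · simp [hDcdef, Matrix.map_apply, SimpleGraph.degMatrix, Matrix.diagonal_apply_ne _ h, h]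
  -- degrees
  have hdeg : ∀ i : ι, (i = a0 ∨ i = a1 ∨ i = a2 ∨ i = a3) → (G.degree i : ℂ) = (c : ℂ) - 2 := by
    intro i hi
    have hset : G.neighborFinset i = Finset.univ \ ({i, if i = a0 then a1 else if i = a1 then a0
        else if i = a2 then a3 else a2} : Finset ι) := by
      ext v
      rcases hi with h | h | h | h <;> subst h <;>
        simp [SimpleGraph.mem_neighborFinset, hadj, d01, d02, d03, d12, d13, d23,
          d10, d20, d30, d21, d31, d32, eq_comm, not_or]
    have hcard : G.degree i = Fintype.card ι - 2 := by
      rw [← SimpleGraph.card_neighborFinset_eq_degree, hset,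
        Finset.card_sdiff_of_subset (Finset.subset_univ _), Finset.card_univ]
      congr 1
      rcases hi with h | h | h | h <;> subst h <;>
        simp [Finset.card_pair, d01, d02, d03, d12, d13, d23, d10, d20, d30, d21, d31, d32]
    rw [hcard, hc]
    push_cast [Nat.cast_sub (by omega : 2 ≤ Fintype.card ι)]
    ring
  have hAp : Ac *ᵥ p = ((0:ℝ):ℂ) • p := by
    funext i
    rw [hpdef, mulVec_p]
    simp only [hAc]
    by_cases h0 : i = a0
    · subst h0
      norm_num [hadj, ket, d01, d02, d03, d12, d13, d23, d10, d20, d30, d21, d31, d32]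
    by_cases h1 : i = a1
    · subst h1
      norm_num [hadj, ket, d01, d02, d03, d12, d13, d23, d10, d20, d30, d21, d31, d32]
    by_cases h2 : i = a2
    · subst h2
      norm_num [hadj, ket, d01, d02, d03, d12, d13, d23, d10, d20, d30, d21, d31, d32]
    by_cases h3 : i = a3
    · subst h3
      norm_num [hadj, ket, d01, d02, d03, d12, d13, d23, d10, d20, d30, d21, d31, d32]
    · norm_num [hadj, ket, h0, h1, h2, h3, d01, d02, d03, d12, d13, d23, d10, d20, d30, d21, d31, d32]
  have hAq : Ac *ᵥ q = ((-2:ℝ):ℂ) • q := by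
    funext i
    rw [hqdef, mulVec_q]
    simp only [hAc]
    by_cases h0 : i = a0
    · subst h0
      norm_num [hadj, ket, d01, d02, d03, d12, d13, d23, d10, d20, d30, d21, d31, d32]
    by_cases h1 : i = a1
    · subst h1
      norm_num [hadj, ket, d01, d02, d03, d12, d13, d23, d10, d20, d30, d21, d31, d32]
    by_cases h2 : i = a2
    · subst h2
      norm_num [hadj, ket, d01, d02, d03, d12, d13, d23, d10, d20, d30, d21, d31, d32]
    by_cases h3 : i = a3
    · subst h3
      norm_num [hadj, ket, d01, d02, d03, d12, d13, d23, d10, d20, d30, d21, d31, d32]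
    · norm_num [hadj, ket, h0, h1, h2, h3, d01, d02, d03, d12, d13, d23, d10, d20, d30, d21, d31, d32]
  have hDp : Dc *ᵥ p = ((c - 2 : ℝ):ℂ) • p := by
    funext i
    rw [hpdef, mulVec_p]
    simp only [hDc]
    by_cases h0 : i = a0
    · subst h0
      rw [hdeg i (by tauto)]
      norm_num [ket, d01, d02, d03, d12, d13, d23, d10, d20, d30, d21, d31, d32]
    by_cases h1 : i = a1
    · subst h1
      rw [hdeg i (by tauto)]
      norm_num [ket, d01, d02, d03, d12, d13, d23, d10, d20, d30, d21, d31, d32]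
    by_cases h2 : i = a2
    · subst h2
      rw [hdeg i (by tauto)]
      norm_num [ket, d01, d02, d03, d12, d13, d23, d10, d20, d30, d21, d31, d32]
    by_cases h3 : i = a3
    · subst h3
      rw [hdeg i (by tauto)]
      norm_num [ket, d01, d02, d03, d12, d13, d23, d10, d20, d30, d21, d31, d32]
    · norm_num [ket, h0, h1, h2, h3]
  have hDq : Dc *ᵥ q = ((c - 2 : ℝ):ℂ) • q := by
    funext i
    rw [hqdef, mulVec_q]
    simp only [hDc]
    by_cases h0 : i = a0
    · subst h0
      rw [hdeg i (by tauto)]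
      norm_num [ket, d01, d02, d03, d12, d13, d23, d10, d20, d30, d21, d31, d32]
    by_cases h1 : i = a1
    · subst h1
      rw [hdeg i (by tauto)]
      norm_num [ket, d01, d02, d03, d12, d13, d23, d10, d20, d30, d21, d31, d32]
    by_cases h2 : i = a2
    · subst h2
      rw [hdeg i (by tauto)]
      norm_num [ket, d01, d02, d03, d12, d13, d23, d10, d20, d30, d21, d31, d32]
    by_cases h3 : i = a3
    · subst h3
      rw [hdeg i (by tauto)]
      norm_num [ket, d01, d02, d03, d12, d13, d23, d10, d20, d30, d21, d31, d32]
    · norm_num [ket, h0, h1, h2, h3]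
  have hLc : (G.lapMatrix ℝ).map (Complex.ofReal ·) = Dc - Ac := by
    funext i j
    simp [SimpleGraph.lapMatrix, Matrix.map_apply, Matrix.sub_apply, hAcdef, hDcdef]
  have hQc : (G.degMatrix ℝ + G.adjMatrix ℝ).map (Complex.ofReal ·) = Dc + Ac := by
    funext i j
    simp [Matrix.map_apply, Matrix.add_apply, hAcdef, hDcdef]
  intro M hM
  simp only [Set.mem_insert_iff, Set.mem_singleton_iff] at hM
  rcases hM with hM | hM | hM <;> subst hM
  · exact key _ a0 a1 a2 a3 0 (-2) hAp hAq (Or.inl (by norm_num))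
  · refine key _ a0 a1 a2 a3 (c - 2) c ?_ ?_ (Or.inr (by ring))
    · rw [hLc, Matrix.sub_mulVec, hDp, hAp, ← sub_smul]
      congr 1
      push_cast
      ring
    · rw [hLc, Matrix.sub_mulVec, hDq, hAq, ← sub_smul]
      congr 1
      push_cast
      ring
  · refine key _ a0 a1 a2 a3 (c - 2) (c - 4) ?_ ?_ (Or.inl (by ring))
    · rw [hQc, Matrix.add_mulVec, hDp, hAp, ← add_smul]
      congr 1
      push_cast
      ring
    · rw [hQc, Matrix.add_mulVec, hDq, hAq, ← add_smul]
      congr 1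
      push_cast
      ring

/-- For `n ≥ 4`, deleting the disjoint edges `{0,1}` and `{2,3}` from
`K_n` yields a graph with pair state transfer between `e₀ − e₂` and `e₁ − e₃` at
time `π/2` relative to each of `A`, `L` and `Q`. -/
theorem stmt5 (n : ℕ) (hn : 4 ≤ n)
    (G : SimpleGraph (Fin n)) [DecidableRel G.Adj]
    (hG : ∀ u v : Fin n, G.Adj u v ↔
      (u ≠ v ∧
        ({u, v} : Set (Fin n)) ≠ {⟨0, by omega⟩, ⟨1, by omega⟩} ∧
        ({u, v} : Set (Fin n)) ≠ {⟨2, by omega⟩, ⟨3, by omega⟩})) :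
    ∀ M ∈ ({G.adjMatrix ℝ, G.lapMatrix ℝ, G.degMatrix ℝ + G.adjMatrix ℝ} :
        Set (Matrix (Fin n) (Fin n) ℝ)),
      ∃ γ : ℂ, ‖γ‖ = 1 ∧
        U M (Real.pi / 2) *ᵥ (ket (⟨0, by omega⟩ : Fin n) - ket ⟨2, by omega⟩) =
          γ • (ket (⟨1, by omega⟩ : Fin n) - ket ⟨3, by omega⟩) := by
  have hpair : ∀ (u v b c : Fin n), (({u, v} : Set (Fin n)) = {b, c}) ↔
      (u = b ∧ v = c ∨ u = c ∧ v = b) := fun _ _ _ _ => Set.pair_eq_pair_iff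
  have hadj : ∀ u v : Fin n, G.Adj u v ↔ u ≠ v ∧
      ¬(u = (⟨0, by omega⟩ : Fin n) ∧ v = ⟨1, by omega⟩) ∧
      ¬(u = (⟨1, by omega⟩ : Fin n) ∧ v = ⟨0, by omega⟩) ∧
      ¬(u = (⟨2, by omega⟩ : Fin n) ∧ v = ⟨3, by omega⟩) ∧
      ¬(u = (⟨3, by omega⟩ : Fin n) ∧ v = ⟨2, by omega⟩) := by
    intro u v
    rw [hG u v]
    simp only [ne_eq, hpair]
    tauto
  exact master G ⟨0, by omega⟩ ⟨1, by omega⟩ ⟨2, by omega⟩ ⟨3, by omega⟩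
    (by simp [hn]) (by simp [Fin.ext_iff]) (by simp [Fin.ext_iff]) (by simp [Fin.ext_iff])
    (by simp [Fin.ext_iff]) (by simp [Fin.ext_iff]) (by simp [Fin.ext_iff]) hadj
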